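/- If A ≥ 0, where A := −b_E^E/√a_E + (b_I^E/√a_E) · b_E^I N_I(0)² I(1/τ_E) / (√a_I + b_I^I N_I(1/τ_E)² I(0)), then F(N_E) := N_E(τ_E + I_1(N_E,N_I(N_E))) is strictly increasing on (0,1/τ_E), and consequently the steady-state system N_E(τ_E + I_1(N_E,N_I)) = 1, N_I(τ_I + I_2(N_E,N_I)) = 1 (with 0 < N_E < 1/τ_E, 0 < N_I < 1/τ_I) has exactly one solution. In particular this holds when the product b_E^I·b_I^E is large enough or b_I^I is small enough in comparison with the remaining parameters. -/

import Mathlib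

open MeasureTheory Set

set_option maxHeartbeats 1600000

/-- K(w_R, w_F) := ∫_0^∞ (e^{-s²/2}/s)(e^{s·w_F} − e^{s·w_R}) ds (Lebesgue integral on (0,∞)). -/
noncomputable def K (wR wF : ℝ) : ℝ :=
  ∫ s in Set.Ioi (0 : ℝ), Real.exp (-s ^ 2 / 2) / s * (Real.exp (s * wF) - Real.exp (s * wR))

/-- I₁(N_E,N_I) with V_0^E(N_E,N_I) := b_E^E N_E − b_I^E N_I + (b_E^E − b_E^E) ν_{E,ext}. -/
noncomputable def I1 (VR VF bEE bIE aE ν NE NI : ℝ) : ℝ :=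
  K ((VR - (bEE * NE - bIE * NI + (bEE - bEE) * ν)) / Real.sqrt aE)
    ((VF - (bEE * NE - bIE * NI + (bEE - bEE) * ν)) / Real.sqrt aE)

/-- I₂(N_E,N_I) with V_0^I(N_E,N_I) := b_E^I N_E − b_I^I N_I + (b_E^I − b_E^E) ν_{E,ext}. -/
noncomputable def I2 (VR VF bEE bEI bII aI ν NE NI : ℝ) : ℝ :=
  K ((VR - (bEI * NE - bII * NI + (bEI - bEE) * ν)) / Real.sqrt aI)
    ((VF - (bEI * NE - bII * NI + (bEI - bEE) * ν)) / Real.sqrt aI)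

/-- I(N_E), with N_I(·) the implicitly defined function. -/
noncomputable def Ifun (VR VF bEE bEI bII aI ν : ℝ) (NIfun : ℝ → ℝ) (NE : ℝ) : ℝ :=
  ∫ s in Set.Ioi (0 : ℝ),
    Real.exp (-s ^ 2 / 2) *
      Real.exp (-((bEI * NE - bII * NIfun NE + (bEI - bEE) * ν) * s) / Real.sqrt aI) *
      (Real.exp (s * VF / Real.sqrt aI) - Real.exp (s * VR / Real.sqrt aI))

noncomputable def M (r f : ℝ) : ℝ :=
  ∫ s in Set.Ioi (0 : ℝ), Real.exp (-s ^ 2 / 2) * (Real.exp (s * f) - Real.exp (s * r))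

lemma le_exp_sub_exp (a b : ℝ) : (b - a) * Real.exp a ≤ Real.exp b - Real.exp a := by
  have h := Real.add_one_le_exp (b - a)
  have h2 : Real.exp b = Real.exp a * Real.exp (b - a) := by
    rw [← Real.exp_add]; ring_nf
  nlinarith [Real.exp_pos a]

lemma exp_sub_exp_le (a b : ℝ) : Real.exp b - Real.exp a ≤ (b - a) * Real.exp b := by
  have h := Real.add_one_le_exp (a - b)
  have h2 : Real.exp a = Real.exp b * Real.exp (a - b) := by
    rw [← Real.exp_add]; ring_nf
  nlinarith [Real.exp_pos b]

lemma int_gauss (b : ℝ) : IntegrableOn (fun s : ℝ => Real.exp (-s ^ 2 / 2 + s * b)) (Set.Ioi 0) := by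
  have h1 : Integrable (fun x : ℝ => Real.exp (-(1/2) * x ^ 2)) := integrable_exp_neg_mul_sq (by norm_num)
  have h2 := (h1.comp_sub_right b).const_mul (Real.exp (b ^ 2 / 2))
  refine Integrable.integrableOn ?_
  convert h2 using 2 with s
  rw [← Real.exp_add]
  ring_nf

lemma int_MB (r f : ℝ) :
    IntegrableOn (fun s : ℝ => Real.exp (-s ^ 2 / 2) * (Real.exp (s * f) - Real.exp (s * r))) (Set.Ioi 0) := by
  have h := (int_gauss f).sub (int_gauss r)
  have he : (fun s : ℝ => Real.exp (-s ^ 2 / 2) * (Real.exp (s * f) - Real.exp (s * r))) =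
      fun s : ℝ => Real.exp (-s ^ 2 / 2 + s * f) - Real.exp (-s ^ 2 / 2 + s * r) := by
    funext s
    rw [mul_sub, ← Real.exp_add, ← Real.exp_add]
  rw [he]
  exact h

lemma int_B {r f : ℝ} (h : r ≤ f) :
    IntegrableOn (fun s : ℝ => Real.exp (-s ^ 2 / 2) / s * (Real.exp (s * f) - Real.exp (s * r))) (Set.Ioi 0) := by
  have hb : IntegrableOn (fun s : ℝ => (f - r) * Real.exp (-s ^ 2 / 2 + s * f)) (Set.Ioi 0) :=
    (int_gauss f).const_mul _
  apply hb.mono'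
  · exact (Measurable.aestronglyMeasurable (by measurability))
  · filter_upwards [ae_restrict_mem measurableSet_Ioi] with s hs
    have hs0 : (0:ℝ) < s := hs
    have hE : Real.exp (s * r) ≤ Real.exp (s * f) := by
      apply Real.exp_le_exp.2; nlinarith
    rw [Real.norm_eq_abs, abs_of_nonneg (mul_nonneg (div_nonneg (Real.exp_pos _).le hs0.le) (by linarith))]
    have key := exp_sub_exp_le (s * r) (s * f)
    have h1 : Real.exp (-s ^ 2 / 2) / s * (Real.exp (s * f) - Real.exp (s * r)) ≤
        Real.exp (-s ^ 2 / 2) / s * ((s * f - s * r) * Real.exp (s * f)) := by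
      apply mul_le_mul_of_nonneg_left key (by positivity)
    refine h1.trans (le_of_eq ?_)
    rw [Real.exp_add]
    field_simp

lemma K_nonneg {r f : ℝ} (h : r ≤ f) : 0 ≤ K r f := by
  apply setIntegral_nonneg measurableSet_Ioi
  intro s hs
  have hs0 : (0:ℝ) < s := hs
  have : Real.exp (s * r) ≤ Real.exp (s * f) := Real.exp_le_exp.2 (by nlinarith)
  apply mul_nonneg (div_nonneg (Real.exp_pos _).le hs0.le) (by linarith)

lemma M_nonneg {r f : ℝ} (h : r ≤ f) : 0 ≤ M r f := by
  apply setIntegral_nonneg measurableSet_Ioi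
  intro s hs
  have hs0 : (0:ℝ) < s := hs
  have : Real.exp (s * r) ≤ Real.exp (s * f) := Real.exp_le_exp.2 (by nlinarith)
  apply mul_nonneg (Real.exp_pos _).le (by linarith)

lemma K_pos {r f : ℝ} (h : r < f) : 0 < K r f := by
  unfold K
  rw [setIntegral_pos_iff_support_of_nonneg_ae]
  · have hsub : Set.Ioi (0:ℝ) ⊆ Function.support
        (fun s : ℝ => Real.exp (-s ^ 2 / 2) / s * (Real.exp (s * f) - Real.exp (s * r))) := by
      intro s hs
      have hs0 : (0:ℝ) < s := hs
      have hlt : Real.exp (s * r) < Real.exp (s * f) := Real.exp_lt_exp.2 (by nlinarith)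
      exact ne_of_gt (mul_pos (div_pos (Real.exp_pos _) hs0) (by linarith))
    rw [Set.inter_eq_self_of_subset_right hsub]
    simp [Real.volume_Ioi]
  · filter_upwards [ae_restrict_mem measurableSet_Ioi] with s hs
    have hs0 : (0:ℝ) < s := hs
    have : Real.exp (s * r) ≤ Real.exp (s * f) := Real.exp_le_exp.2 (by nlinarith)
    exact mul_nonneg (div_nonneg (Real.exp_pos _).le hs0.le) (by linarith)
  · exact int_B h.le

lemma M_pos {r f : ℝ} (h : r < f) : 0 < M r f := by
  unfold M
  rw [setIntegral_pos_iff_support_of_nonneg_ae]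
  · have hsub : Set.Ioi (0:ℝ) ⊆ Function.support
        (fun s : ℝ => Real.exp (-s ^ 2 / 2) * (Real.exp (s * f) - Real.exp (s * r))) := by
      intro s hs
      have hs0 : (0:ℝ) < s := hs
      have hlt : Real.exp (s * r) < Real.exp (s * f) := Real.exp_lt_exp.2 (by nlinarith)
      exact ne_of_gt (mul_pos (Real.exp_pos _) (by linarith))
    rw [Set.inter_eq_self_of_subset_right hsub]
    simp [Real.volume_Ioi]
  · filter_upwards [ae_restrict_mem measurableSet_Ioi] with s hs
    have hs0 : (0:ℝ) < s := hs
    have : Real.exp (s * r) ≤ Real.exp (s * f) := Real.exp_le_exp.2 (by nlinarith)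
    exact mul_nonneg (Real.exp_pos _).le (by linarith)
  · exact int_MB r f

lemma K_shift_ge {r f : ℝ} (h : r ≤ f) (δ : ℝ) : δ * M r f ≤ K (r + δ) (f + δ) - K r f := by
  unfold K M
  rw [← integral_sub (int_B (by linarith)) (int_B h), ← integral_const_mul]
  apply setIntegral_mono_on ((int_MB r f).const_mul δ)
    (((int_B (show r + δ ≤ f + δ by linarith)).sub (int_B h)))
    measurableSet_Ioi
  intro s hs
  have hs0 : (0:ℝ) < s := hs
  have e1 : Real.exp (s * (f + δ)) = Real.exp (s * f) * Real.exp (s * δ) := by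
    rw [← Real.exp_add]; ring_nf
  have e2 : Real.exp (s * (r + δ)) = Real.exp (s * r) * Real.exp (s * δ) := by
    rw [← Real.exp_add]; ring_nf
  have hE : 0 ≤ Real.exp (s * f) - Real.exp (s * r) := by
    have : Real.exp (s * r) ≤ Real.exp (s * f) := Real.exp_le_exp.2 (by nlinarith)
    linarith
  have hX : 0 ≤ Real.exp (s * δ) - 1 - s * δ := by
    have := Real.add_one_le_exp (s * δ); linarith
  have hG : 0 < Real.exp (-s ^ 2 / 2) := Real.exp_pos _
  simp only [Pi.sub_apply]
  rw [e1, e2]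
  rw [div_mul_eq_mul_div, div_mul_eq_mul_div, div_sub_div_same, le_div_iff₀ hs0]
  nlinarith [mul_nonneg (mul_nonneg hG.le hE) hX]

lemma K_shift_le {r f : ℝ} (h : r ≤ f) {δ : ℝ} (hδ : 0 ≤ δ) :
    K (r + δ) (f + δ) - K r f ≤ δ * M (r + δ) (f + δ) := by
  unfold K M
  rw [← integral_sub (int_B (by linarith)) (int_B h), ← integral_const_mul]
  apply setIntegral_mono_on
    (((int_B (show r + δ ≤ f + δ by linarith)).sub (int_B h)))
    ((int_MB (r + δ) (f + δ)).const_mul δ)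
    measurableSet_Ioi
  intro s hs
  have hs0 : (0:ℝ) < s := hs
  have e1 : Real.exp (s * (f + δ)) = Real.exp (s * f) * Real.exp (s * δ) := by
    rw [← Real.exp_add]; ring_nf
  have e2 : Real.exp (s * (r + δ)) = Real.exp (s * r) * Real.exp (s * δ) := by
    rw [← Real.exp_add]; ring_nf
  have hE : 0 ≤ Real.exp (s * f) - Real.exp (s * r) := by
    have : Real.exp (s * r) ≤ Real.exp (s * f) := Real.exp_le_exp.2 (by nlinarith)
    linarith
  have hX : Real.exp (s * δ) - 1 ≤ s * δ * Real.exp (s * δ) := by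
    have h1 := Real.add_one_le_exp (-(s * δ))
    have h2 : Real.exp (-(s * δ)) * Real.exp (s * δ) = 1 := by
      rw [← Real.exp_add]; simp
    nlinarith [Real.exp_pos (s * δ)]
  have hG : 0 < Real.exp (-s ^ 2 / 2) := Real.exp_pos _
  simp only [Pi.sub_apply]
  rw [e1, e2]
  rw [div_mul_eq_mul_div, div_mul_eq_mul_div, div_sub_div_same, div_le_iff₀ hs0]
  nlinarith [mul_nonneg (mul_nonneg hG.le hE) (sub_nonneg.2 hX)]

lemma M_shift {r f : ℝ} (h : r ≤ f) {δ : ℝ} (hδ : 0 ≤ δ) : M r f ≤ M (r + δ) (f + δ) := by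
  unfold M
  apply setIntegral_mono_on (int_MB r f) (int_MB (r + δ) (f + δ)) measurableSet_Ioi
  intro s hs
  have hs0 : (0:ℝ) < s := hs
  have e1 : Real.exp (s * (f + δ)) = Real.exp (s * f) * Real.exp (s * δ) := by
    rw [← Real.exp_add]; ring_nf
  have e2 : Real.exp (s * (r + δ)) = Real.exp (s * r) * Real.exp (s * δ) := by
    rw [← Real.exp_add]; ring_nf
  have hE : 0 ≤ Real.exp (s * f) - Real.exp (s * r) := by
    have : Real.exp (s * r) ≤ Real.exp (s * f) := Real.exp_le_exp.2 (by nlinarith)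
    linarith
  have hX : 1 ≤ Real.exp (s * δ) := Real.one_le_exp (by positivity)
  have hG : 0 < Real.exp (-s ^ 2 / 2) := Real.exp_pos _
  rw [e1, e2]
  nlinarith [mul_nonneg (mul_nonneg hG.le hE) (sub_nonneg.2 hX)]

noncomputable def KV (VR VF sq V : ℝ) : ℝ := K ((VR - V) / sq) ((VF - V) / sq)
noncomputable def MV (VR VF sq V : ℝ) : ℝ := M ((VR - V) / sq) ((VF - V) / sq)

variable {VR VF sq : ℝ}

lemma rf_le (h : VR ≤ VF) (hsq : 0 < sq) (V : ℝ) : (VR - V) / sq ≤ (VF - V) / sq :=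
  by gcongr

lemma rf_lt (h : VR < VF) (hsq : 0 < sq) (V : ℝ) : (VR - V) / sq < (VF - V) / sq := by
  apply div_lt_div_of_pos_right (by linarith) hsq

lemma KV_nonneg (h : VR ≤ VF) (hsq : 0 < sq) (V : ℝ) : 0 ≤ KV VR VF sq V :=
  K_nonneg (rf_le h hsq V)
lemma MV_nonneg (h : VR ≤ VF) (hsq : 0 < sq) (V : ℝ) : 0 ≤ MV VR VF sq V :=
  M_nonneg (rf_le h hsq V)
lemma KV_pos (h : VR < VF) (hsq : 0 < sq) (V : ℝ) : 0 < KV VR VF sq V :=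
  K_pos (rf_lt h hsq V)
lemma MV_pos (h : VR < VF) (hsq : 0 < sq) (V : ℝ) : 0 < MV VR VF sq V :=
  M_pos (rf_lt h hsq V)

lemma KV_master (h : VR ≤ VF) (hsq : 0 < sq) (V W : ℝ) :
    (W - V) / sq * MV VR VF sq W ≤ KV VR VF sq V - KV VR VF sq W := by
  have h1 : (VR - V) / sq = (VR - W) / sq + (W - V) / sq := by
    rw [← add_div]; ring_nf
  have h2 : (VF - V) / sq = (VF - W) / sq + (W - V) / sq := by
    rw [← add_div]; ring_nf
  unfold KV MV
  rw [h1, h2]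
  exact K_shift_ge (rf_le h hsq W) _

lemma KV_masterle (h : VR ≤ VF) (hsq : 0 < sq) {V W : ℝ} (hVW : V ≤ W) :
    KV VR VF sq V - KV VR VF sq W ≤ (W - V) / sq * MV VR VF sq V := by
  have h1 : (VR - V) / sq = (VR - W) / sq + (W - V) / sq := by
    rw [← add_div]; ring_nf
  have h2 : (VF - V) / sq = (VF - W) / sq + (W - V) / sq := by
    rw [← add_div]; ring_nf
  unfold KV MV
  rw [h1, h2]
  exact K_shift_le (rf_le h hsq W) (div_nonneg (by linarith) hsq.le)

lemma MV_anti (h : VR ≤ VF) (hsq : 0 < sq) {V W : ℝ} (hVW : V ≤ W) :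
    MV VR VF sq W ≤ MV VR VF sq V := by
  have h1 : (VR - V) / sq = (VR - W) / sq + (W - V) / sq := by
    rw [← add_div]; ring_nf
  have h2 : (VF - V) / sq = (VF - W) / sq + (W - V) / sq := by
    rw [← add_div]; ring_nf
  unfold MV
  rw [h1, h2]
  exact M_shift (rf_le h hsq W) (div_nonneg (by linarith) hsq.le)

lemma KV_anti (h : VR ≤ VF) (hsq : 0 < sq) {V W : ℝ} (hVW : V ≤ W) :
    KV VR VF sq W ≤ KV VR VF sq V := by
  have := KV_master h hsq V W
  have h2 : 0 ≤ (W - V) / sq * MV VR VF sq W :=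
    mul_nonneg (div_nonneg (by linarith) hsq.le) (MV_nonneg h hsq W)
  linarith

lemma KV_cont (h : VR ≤ VF) (hsq : 0 < sq) : Continuous (KV VR VF sq) := by
  rw [continuous_iff_continuousAt]
  intro V₀
  set L : ℝ := MV VR VF sq (V₀ - 1) / sq with hL
  have hL0 : 0 ≤ L := div_nonneg (MV_nonneg h hsq _) hsq.le
  have key : ∀ x ∈ Set.Ici (V₀ - 1), ∀ y ∈ Set.Ici (V₀ - 1), x ≤ y →
      0 ≤ KV VR VF sq x - KV VR VF sq y ∧ KV VR VF sq x - KV VR VF sq y ≤ L * (y - x) := by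
    intro x hx y hy hxy
    constructor
    · linarith [KV_anti h hsq hxy]
    · have h1 := KV_masterle h hsq hxy
      have h2 : MV VR VF sq x ≤ MV VR VF sq (V₀ - 1) := MV_anti h hsq hx
      have h3 : (y - x) / sq * MV VR VF sq x ≤ (y - x) / sq * MV VR VF sq (V₀ - 1) :=
        mul_le_mul_of_nonneg_left h2 (div_nonneg (by linarith) hsq.le)
      have h4 : (y - x) / sq * MV VR VF sq (V₀ - 1) = L * (y - x) := by
        rw [hL]; field_simp
      linarith
  have lip : LipschitzOnWith (Real.toNNReal L) (KV VR VF sq) (Set.Ici (V₀ - 1)) := by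
    apply LipschitzOnWith.of_dist_le_mul
    intro x hx y hy
    rw [Real.dist_eq, Real.dist_eq, Real.coe_toNNReal L hL0]
    rcases le_total x y with hxy | hxy
    · obtain ⟨ha, hb⟩ := key x hx y hy hxy
      rw [abs_of_nonneg (by linarith), abs_of_nonpos (by linarith)]
      linarith
    · obtain ⟨ha, hb⟩ := key y hy x hx hxy
      rw [abs_of_nonpos (by linarith), abs_of_nonneg (by linarith)]
      linarith
  exact lip.continuousOn.continuousAt (Ici_mem_nhds (by linarith))

lemma Ifun_eq (VR VF bEE bEI bII aI ν : ℝ) (g : ℝ → ℝ) (x : ℝ) (haI : 0 < aI) :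
    Ifun VR VF bEE bEI bII aI ν g x =
      MV VR VF (Real.sqrt aI) (bEI * x - bII * g x + (bEI - bEE) * ν) := by
  have hs : Real.sqrt aI ≠ 0 := ne_of_gt (Real.sqrt_pos.mpr haI)
  unfold Ifun MV M
  congr 1
  funext s
  rw [mul_sub, mul_sub]
  simp only [← Real.exp_add]
  congr 2 <;> field_simp <;> ring

/- STATEMENT 13: If A ≥ 0, with
A := −b_E^E/√a_E + (b_I^E/√a_E)·b_E^I N_I(0)² I(1/τ_E)/(√a_I + b_I^I N_I(1/τ_E)² I(0)),
then F(N_E) := N_E(τ_E + I_1(N_E,N_I(N_E))) is strictly increasing on (0,1/τ_E), and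
consequently the steady-state system has exactly one solution. -/
theorem unique_steady_state_of_A_nonneg (VR VF bEE bIE bEI bII τE τI aE aI ν : ℝ)
    (hV : VR < VF) (hbEE : 0 < bEE) (hbIE : 0 < bIE) (hbEI : 0 < bEI) (hbII : 0 < bII)
    (hτE : 0 < τE) (hτI : 0 < τI) (haE : 0 < aE) (haI : 0 < aI) (hν : 0 ≤ ν)
    (NIfun : ℝ → ℝ)
    (hNIfun : ∀ NE : ℝ, 0 ≤ NE → NIfun NE ∈ Set.Ioo 0 (1 / τI) ∧
      NIfun NE * (τI + I2 VR VF bEE bEI bII aI ν NE (NIfun NE)) = 1)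
    (hA : 0 ≤ -(bEE / Real.sqrt aE) + bIE / Real.sqrt aE *
      (bEI * (NIfun 0) ^ 2 * Ifun VR VF bEE bEI bII aI ν NIfun (1 / τE) /
        (Real.sqrt aI + bII * (NIfun (1 / τE)) ^ 2 * Ifun VR VF bEE bEI bII aI ν NIfun 0))) :
    StrictMonoOn (fun x => x * (τE + I1 VR VF bEE bIE aE ν x (NIfun x)))
      (Set.Ioo 0 (1 / τE)) ∧
    ∃! p : ℝ × ℝ, p.1 ∈ Set.Ioo 0 (1 / τE) ∧ p.2 ∈ Set.Ioo 0 (1 / τI) ∧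
      p.1 * (τE + I1 VR VF bEE bIE aE ν p.1 p.2) = 1 ∧
      p.2 * (τI + I2 VR VF bEE bEI bII aI ν p.1 p.2) = 1 := by
  have hsE : 0 < Real.sqrt aE := Real.sqrt_pos.mpr haE
  have hsI : 0 < Real.sqrt aI := Real.sqrt_pos.mpr haI
  have hL : 0 < 1 / τE := by positivity
  have hm0 : ∀ x : ℝ, 0 ≤ x → 0 < NIfun x := fun x hx => (hNIfun x hx).1.1
  have hm1 : ∀ x : ℝ, 0 ≤ x → NIfun x < 1 / τI := fun x hx => (hNIfun x hx).1.2
  have heq : ∀ x : ℝ, 0 ≤ x →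
      NIfun x * (τI + KV VR VF (Real.sqrt aI) (bEI * x - bII * NIfun x + (bEI - bEE) * ν)) = 1 :=
    fun x hx => (hNIfun x hx).2
  have hKVeq : ∀ x : ℝ, 0 ≤ x →
      KV VR VF (Real.sqrt aI) (bEI * x - bII * NIfun x + (bEI - bEE) * ν) = 1 / NIfun x - τI := by
    intro x hx
    have h1 := heq x hx
    have h2 := hm0 x hx
    field_simp
    linarith [h1]
  -- Step A
  have stepA : ∀ x y : ℝ, 0 ≤ x → x < y →
      0 < NIfun y - NIfun x ∧ bII * (NIfun y - NIfun x) < bEI * (y - x) ∧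
      NIfun x * NIfun y * MV VR VF (Real.sqrt aI) (bEI * y - bII * NIfun y + (bEI - bEE) * ν) *
        (bEI * (y - x) - bII * (NIfun y - NIfun x)) ≤ (NIfun y - NIfun x) * Real.sqrt aI := by
    intro x y hx hxy
    have hy : (0:ℝ) ≤ y := le_trans hx hxy.le
    have hmx := hm0 x hx
    have hmy := hm0 y hy
    have master := KV_master hV.le hsI
      (bEI * x - bII * NIfun x + (bEI - bEE) * ν) (bEI * y - bII * NIfun y + (bEI - bEE) * ν)
    have hsub : KV VR VF (Real.sqrt aI) (bEI * x - bII * NIfun x + (bEI - bEE) * ν) -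
        KV VR VF (Real.sqrt aI) (bEI * y - bII * NIfun y + (bEI - bEE) * ν) =
        (NIfun y - NIfun x) / (NIfun x * NIfun y) := by
      rw [hKVeq x hx, hKVeq y hy]
      field_simp
      ring
    rw [hsub] at master
    have hJy : 0 < MV VR VF (Real.sqrt aI) (bEI * y - bII * NIfun y + (bEI - bEE) * ν) :=
      MV_pos hV hsI _
    have hΔ : 0 < NIfun y - NIfun x := by
      by_contra hc
      push_neg at hc
      have hδV : 0 < (bEI * y - bII * NIfun y + (bEI - bEE) * ν) -
          (bEI * x - bII * NIfun x + (bEI - bEE) * ν) := by nlinarith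
      have hL2 : 0 < ((bEI * y - bII * NIfun y + (bEI - bEE) * ν) -
          (bEI * x - bII * NIfun x + (bEI - bEE) * ν)) / Real.sqrt aI *
          MV VR VF (Real.sqrt aI) (bEI * y - bII * NIfun y + (bEI - bEE) * ν) :=
        mul_pos (div_pos hδV hsI) hJy
      have hR : (NIfun y - NIfun x) / (NIfun x * NIfun y) ≤ 0 :=
        div_nonpos_of_nonpos_of_nonneg hc (mul_pos hmx hmy).le
      linarith
    have hδV : 0 < (bEI * y - bII * NIfun y + (bEI - bEE) * ν) -
        (bEI * x - bII * NIfun x + (bEI - bEE) * ν) := by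
      by_contra hc
      push_neg at hc
      have hanti := KV_anti hV.le hsI (show bEI * y - bII * NIfun y + (bEI - bEE) * ν ≤
          bEI * x - bII * NIfun x + (bEI - bEE) * ν by linarith)
      rw [hKVeq x hx, hKVeq y hy] at hanti
      have h2 : 1 / NIfun x ≤ 1 / NIfun y := by linarith
      have h3 : NIfun y ≤ NIfun x := le_of_one_div_le_one_div hmx h2
      linarith
    refine ⟨hΔ, by nlinarith, ?_⟩
    rw [div_mul_eq_mul_div, div_le_div_iff₀ hsI (mul_pos hmx hmy)] at master
    nlinarith [master]
  -- monotonicity of NIfun and of V along the curve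
  have hmono : ∀ x y : ℝ, 0 ≤ x → x ≤ y → NIfun x ≤ NIfun y := by
    intro x y hx hxy
    rcases eq_or_lt_of_le hxy with h | h
    · exact le_of_eq (congrArg NIfun h)
    · linarith [(stepA x y hx h).1]
  have hVmono : ∀ x y : ℝ, 0 ≤ x → x ≤ y →
      bEI * x - bII * NIfun x + (bEI - bEE) * ν ≤ bEI * y - bII * NIfun y + (bEI - bEE) * ν := by
    intro x y hx hxy
    rcases eq_or_lt_of_le hxy with h | h
    · rw [h]
    · have := (stepA x y hx h).2.1
      linarith
  rw [Ifun_eq VR VF bEE bEI bII aI ν NIfun (1 / τE) haI,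
    Ifun_eq VR VF bEE bEI bII aI ν NIfun 0 haI] at hA
  set J1 := MV VR VF (Real.sqrt aI) (bEI * (1 / τE) - bII * NIfun (1 / τE) + (bEI - bEE) * ν) with hJ1def
  set J0 := MV VR VF (Real.sqrt aI) (bEI * 0 - bII * NIfun 0 + (bEI - bEE) * ν) with hJ0def
  have hJ1pos : 0 < J1 := MV_pos hV hsI _
  have hJ0pos : 0 < J0 := MV_pos hV hsI _
  have hJ10 : J1 ≤ J0 := MV_anti hV.le hsI (hVmono 0 (1 / τE) le_rfl hL.le)
  have hJanti : ∀ y : ℝ, 0 ≤ y → y ≤ 1 / τE →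
      J1 ≤ MV VR VF (Real.sqrt aI) (bEI * y - bII * NIfun y + (bEI - bEE) * ν) := by
    intro y hy hyL
    exact MV_anti hV.le hsI (hVmono y (1 / τE) hy hyL)
  clear_value J1 J0
  have hmLU : NIfun 0 ≤ NIfun (1 / τE) := hmono 0 (1 / τE) le_rfl hL.le
  have hmLpos : 0 < NIfun 0 := hm0 0 le_rfl
  have hden : 0 < Real.sqrt aI + bII * NIfun (1 / τE) ^ 2 * J0 := by
    have h1 : 0 ≤ bII * NIfun (1 / τE) ^ 2 * J0 :=
      mul_nonneg (by positivity) hJ0pos.le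
    linarith
  have hA' : bEE * (Real.sqrt aI + bII * NIfun (1 / τE) ^ 2 * J0) ≤
      bIE * (bEI * NIfun 0 ^ 2 * J1) := by
    have h1 : bEE / Real.sqrt aE ≤ bIE / Real.sqrt aE *
        (bEI * NIfun 0 ^ 2 * J1 / (Real.sqrt aI + bII * NIfun (1 / τE) ^ 2 * J0)) := by
      linarith [hA]
    rw [div_mul_div_comm] at h1
    rw [div_le_div_iff₀ hsE (mul_pos hsE hden)] at h1
    have h4 : bEE * (Real.sqrt aI + bII * NIfun (1 / τE) ^ 2 * J0) * Real.sqrt aE ≤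
        bIE * (bEI * NIfun 0 ^ 2 * J1) * Real.sqrt aE := by nlinarith [h1]
    exact le_of_mul_le_mul_right h4 hsE
  -- Step C : quantitative growth of NIfun
  have stepC : ∀ x y : ℝ, 0 ≤ x → x < y → y ≤ 1 / τE →
      bEE * (y - x) ≤ bIE * (NIfun y - NIfun x) := by
    intro x y hx hxy hyL
    obtain ⟨hΔ, hδ, hkey⟩ := stepA x y hx hxy
    have hy : (0:ℝ) ≤ y := hx.trans hxy.le
    have hmx := hm0 x hx
    have hmy := hm0 y hy
    have hJy1 : J1 ≤ MV VR VF (Real.sqrt aI) (bEI * y - bII * NIfun y + (bEI - bEE) * ν) :=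
      hJanti y hy hyL
    have hmxL : NIfun 0 ≤ NIfun x := hmono 0 x le_rfl hx
    have hmyL : NIfun 0 ≤ NIfun y := hmono 0 y le_rfl hy
    have t1 : NIfun 0 * NIfun 0 ≤ NIfun x * NIfun y :=
      mul_le_mul hmxL hmyL hmLpos.le hmx.le
    have t2 : NIfun 0 * NIfun 0 * J1 ≤
        NIfun x * NIfun y * MV VR VF (Real.sqrt aI) (bEI * y - bII * NIfun y + (bEI - bEE) * ν) :=
      mul_le_mul t1 hJy1 hJ1pos.le (mul_nonneg hmx.le hmy.le)
    have hδpos : 0 < bEI * (y - x) - bII * (NIfun y - NIfun x) := by linarith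
    have hkey2 : NIfun 0 ^ 2 * J1 * (bEI * (y - x) - bII * (NIfun y - NIfun x)) ≤
        (NIfun y - NIfun x) * Real.sqrt aI := by
      calc NIfun 0 ^ 2 * J1 * (bEI * (y - x) - bII * (NIfun y - NIfun x))
          = NIfun 0 * NIfun 0 * J1 * (bEI * (y - x) - bII * (NIfun y - NIfun x)) := by ring
        _ ≤ NIfun x * NIfun y * MV VR VF (Real.sqrt aI) (bEI * y - bII * NIfun y + (bEI - bEE) * ν) *
            (bEI * (y - x) - bII * (NIfun y - NIfun x)) :=
            mul_le_mul_of_nonneg_right t2 hδpos.le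
        _ ≤ (NIfun y - NIfun x) * Real.sqrt aI := hkey
    have hsq2 : NIfun 0 ^ 2 ≤ NIfun (1 / τE) ^ 2 := by nlinarith [hmLU, hmLpos]
    have ht01 : NIfun 0 ^ 2 * J1 ≤ NIfun (1 / τE) ^ 2 * J0 :=
      mul_le_mul hsq2 hJ10 hJ1pos.le (by positivity)
    -- combine
    have hstep1 : bEE * (y - x) * (Real.sqrt aI + bII * NIfun (1 / τE) ^ 2 * J0) ≤
        bIE * (bEI * NIfun 0 ^ 2 * J1) * (y - x) :=
      by nlinarith [mul_le_mul_of_nonneg_right hA' (show (0:ℝ) ≤ y - x by linarith)]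
    have hstep2 : bIE * (bEI * NIfun 0 ^ 2 * J1) * (y - x) ≤
        bIE * ((NIfun y - NIfun x) * Real.sqrt aI + bII * (NIfun 0 ^ 2 * J1) * (NIfun y - NIfun x)) := by
      have := mul_le_mul_of_nonneg_left hkey2 hbIE.le
      nlinarith [this]
    have hstep3 : bIE * ((NIfun y - NIfun x) * Real.sqrt aI + bII * (NIfun 0 ^ 2 * J1) * (NIfun y - NIfun x)) ≤
        bIE * (NIfun y - NIfun x) * (Real.sqrt aI + bII * NIfun (1 / τE) ^ 2 * J0) := by
      nlinarith [mul_le_mul_of_nonneg_left (mul_le_mul_of_nonneg_right ht01 hΔ.le)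
        (mul_nonneg hbIE.le hbII.le)]
    have hfin : bEE * (y - x) * (Real.sqrt aI + bII * NIfun (1 / τE) ^ 2 * J0) ≤
        bIE * (NIfun y - NIfun x) * (Real.sqrt aI + bII * NIfun (1 / τE) ^ 2 * J0) := by linarith
    exact le_of_mul_le_mul_right hfin hden
  -- Strict monotonicity of F
  have hSM : StrictMonoOn (fun x => x * (τE + I1 VR VF bEE bIE aE ν x (NIfun x)))
      (Set.Ioo 0 (1 / τE)) := by
    intro a ha b hb hab
    show a * (τE + KV VR VF (Real.sqrt aE) (bEE * a - bIE * NIfun a + (bEE - bEE) * ν)) <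
      b * (τE + KV VR VF (Real.sqrt aE) (bEE * b - bIE * NIfun b + (bEE - bEE) * ν))
    have hC := stepC a b ha.1.le hab hb.2.le
    have hVE : bEE * b - bIE * NIfun b + (bEE - bEE) * ν ≤
        bEE * a - bIE * NIfun a + (bEE - bEE) * ν := by linarith
    have hKab := KV_anti hV.le hsE hVE
    have hKa0 := KV_nonneg hV.le hsE (bEE * a - bIE * NIfun a + (bEE - bEE) * ν)
    nlinarith [ha.1, hab, hKab, hKa0, hτE]
  refine ⟨hSM, ?_⟩
  -- continuity of NIfun on [0,∞)
  have hcontm : ContinuousOn NIfun (Set.Ici 0) := by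
    have hlip : LipschitzOnWith (Real.toNNReal (bEI / bII)) NIfun (Set.Ici 0) := by
      apply LipschitzOnWith.of_dist_le_mul
      intro x hx y hy
      rw [Real.dist_eq, Real.dist_eq, Real.coe_toNNReal _ (by positivity)]
      rcases lt_trichotomy x y with h | h | h
      · obtain ⟨hΔ, hδ, -⟩ := stepA x y hx h
        rw [abs_of_nonpos (by linarith), abs_of_nonpos (by linarith)]
        rw [div_mul_eq_mul_div, le_div_iff₀ hbII]
        nlinarith
      · rw [h]; simp
      · obtain ⟨hΔ, hδ, -⟩ := stepA y x hy h
        rw [abs_of_nonneg (by linarith), abs_of_nonneg (by linarith)]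
        rw [div_mul_eq_mul_div, le_div_iff₀ hbII]
        nlinarith
    exact hlip.continuousOn
  have hcontVE : ContinuousOn (fun x => bEE * x - bIE * NIfun x + (bEE - bEE) * ν) (Set.Ici 0) :=
    ((continuousOn_const.mul (continuous_id.continuousOn)).sub
      (continuousOn_const.mul hcontm)).add continuousOn_const
  have hcontF : ContinuousOn
      (fun x => x * (τE + KV VR VF (Real.sqrt aE) (bEE * x - bIE * NIfun x + (bEE - bEE) * ν)))
      (Set.Icc 0 (1 / τE)) := by
    apply ContinuousOn.mul (continuous_id.continuousOn)
    apply ContinuousOn.add continuousOn_const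
    exact (KV_cont hV.le hsE).comp_continuousOn (hcontVE.mono Set.Icc_subset_Ici_self)
  have hFL : 1 < (1 / τE) * (τE + KV VR VF (Real.sqrt aE)
      (bEE * (1 / τE) - bIE * NIfun (1 / τE) + (bEE - bEE) * ν)) := by
    have hKL := KV_pos hV hsE (bEE * (1 / τE) - bIE * NIfun (1 / τE) + (bEE - bEE) * ν)
    have hτ : (1 / τE) * τE = 1 := by field_simp
    nlinarith [hKL, hL]
  have ivt := intermediate_value_Ioo (le_of_lt hL) hcontF
  have hmem : (1:ℝ) ∈ Set.Ioo
      ((fun x => x * (τE + KV VR VF (Real.sqrt aE) (bEE * x - bIE * NIfun x + (bEE - bEE) * ν))) 0)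
      ((fun x => x * (τE + KV VR VF (Real.sqrt aE) (bEE * x - bIE * NIfun x + (bEE - bEE) * ν))) (1 / τE)) := by
    constructor
    · simp
    · exact hFL
  obtain ⟨c, hc, hFc⟩ := ivt hmem
  -- strict monotonicity of the NI-equation in NI
  have hGmono : ∀ xp n₁ n₂ : ℝ, 0 < n₁ → n₁ < n₂ →
      n₁ * (τI + KV VR VF (Real.sqrt aI) (bEI * xp - bII * n₁ + (bEI - bEE) * ν)) <
      n₂ * (τI + KV VR VF (Real.sqrt aI) (bEI * xp - bII * n₂ + (bEI - bEE) * ν)) := by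
    intro xp n₁ n₂ h1 h12
    have hVle : bEI * xp - bII * n₂ + (bEI - bEE) * ν ≤
        bEI * xp - bII * n₁ + (bEI - bEE) * ν := by nlinarith
    have hK12 := KV_anti hV.le hsI hVle
    have hK0 := KV_nonneg hV.le hsI (bEI * xp - bII * n₁ + (bEI - bEE) * ν)
    nlinarith
  refine ⟨(c, NIfun c), ⟨hc, (hNIfun c hc.1.le).1, hFc, (hNIfun c hc.1.le).2⟩, ?_⟩
  rintro ⟨p₁, p₂⟩ ⟨hp1, hp2, he1, he2⟩
  have hp1' : (0:ℝ) ≤ p₁ := hp1.1.le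
  have he2' : p₂ * (τI + KV VR VF (Real.sqrt aI) (bEI * p₁ - bII * p₂ + (bEI - bEE) * ν)) = 1 := he2
  have hpm : p₂ = NIfun p₁ := by
    rcases lt_trichotomy p₂ (NIfun p₁) with h | h | h
    · exfalso
      have := hGmono p₁ p₂ (NIfun p₁) hp2.1 h
      have e2 := heq p₁ hp1'
      linarith
    · exact h
    · exfalso
      have := hGmono p₁ (NIfun p₁) p₂ (hm0 p₁ hp1') h
      have e2 := heq p₁ hp1'
      linarith
  have hFp : p₁ * (τE + I1 VR VF bEE bIE aE ν p₁ (NIfun p₁)) = 1 := by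
    rw [← hpm]; exact he1
  have hp1c : p₁ = c := by
    apply hSM.injOn hp1 hc
    show p₁ * (τE + I1 VR VF bEE bIE aE ν p₁ (NIfun p₁)) =
      c * (τE + I1 VR VF bEE bIE aE ν c (NIfun c))
    rw [hFp]
    exact hFc.symm
  rw [hpm, hp1c]
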